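/- arXiv:2111.02501 — 2 statements merged into one kernel-verified Lean document; each statement's English description precedes it below -/
import Mathlib

section
/- Let R be a commutative Krasner hyperring with nonzero identity and let T be a proper hyperideal of R. If T is a φ-prime hyperideal of R for a function φ : L(R) → L(R) ∪ {∅} with φ ≤ φ₃ (i.e. φ(N) ⊆ N³ for every hyperideal N), then T is a w-prime hyperideal of R. -/
universe u

/-- A commutative Krasner hyperring with nonzero identity. -/
class KrasnerHyperring (R : Type u) where
  hadd : R → R → Set R
  mul : R → R → R
  zero : R
  one : R
  neg : R → R
  hadd_nonempty : ∀ a b : R, (hadd a b).Nonempty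
  hadd_comm : ∀ a b : R, hadd a b = hadd b a
  hadd_assoc : ∀ a b c : R, (⋃ x ∈ hadd a b, hadd x c) = ⋃ y ∈ hadd b c, hadd a y
  hadd_zero : ∀ a : R, hadd a zero = {a}
  zero_mem_hadd_neg : ∀ a : R, zero ∈ hadd a (neg a)
  neg_unique : ∀ a b : R, zero ∈ hadd a b → b = neg a
  reversible : ∀ a b c : R, c ∈ hadd a b → b ∈ hadd (neg a) c
  mul_assoc : ∀ a b c : R, mul (mul a b) c = mul a (mul b c)
  mul_comm : ∀ a b : R, mul a b = mul b a
  mul_one : ∀ a : R, mul a one = a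
  mul_zero : ∀ a : R, mul a zero = zero
  one_ne_zero : one ≠ zero
  distrib : ∀ a b c : R, (fun x => mul a x) '' hadd b c = hadd (mul a b) (mul a c)

namespace KrasnerHyperring

variable {R : Type u} [KrasnerHyperring R]

/-- A hyperideal of a Krasner hyperring. -/
structure Hyperideal (R : Type u) [KrasnerHyperring R] where
  carrier : Set R
  nonempty' : carrier.Nonempty
  hadd_subset' : ∀ a ∈ carrier, ∀ b ∈ carrier, hadd a b ⊆ carrier
  neg_mem' : ∀ a ∈ carrier, neg a ∈ carrier
  mul_mem' : ∀ r : R, ∀ a ∈ carrier, mul r a ∈ carrier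

instance : SetLike (Hyperideal R) R where
  coe := Hyperideal.carrier
  coe_injective := by rintro ⟨⟩ ⟨⟩ h; congr

/-- A hyperideal is proper if it is not the whole hyperring. -/
def Hyperideal.IsProper (N : Hyperideal R) : Prop := (N : Set R) ≠ Set.univ

/-- `A ⊕ B` for subsets. -/
def haddSet (A B : Set R) : Set R := ⋃ a ∈ A, ⋃ b ∈ B, hadd a b

/-- `A ∘ B` : set of all products. -/
def mulSet (A B : Set R) : Set R := {x : R | ∃ a ∈ A, ∃ b ∈ B, x = mul a b}

/-- The hyperideal generated by a set (as a set). -/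
def genIdeal (S : Set R) : Set R := ⋂₀ {C : Set R | (∃ I : Hyperideal R, C = ↑I) ∧ S ⊆ C}

/-- Products of `n` elements of `S`. -/
def setPow (S : Set R) : ℕ → Set R
  | 0 => Set.univ
  | 1 => S
  | (n+2) => mulSet S (setPow S (n+1))

/-- `N^n` : the hyperideal generated by products of `n` elements of `N`. -/
def idealPow (N : Hyperideal R) (n : ℕ) : Set R := genIdeal (setPow (↑N) n)

/-- Powers of an element. -/
def hpow (a : R) : ℕ → R
  | 0 => one
  | (n+1) => mul a (hpow a n)

/-- The radical of a set. -/
def radical (A : Set R) : Set R := {a : R | ∃ n : ℕ, 0 < n ∧ hpow a n ∈ A}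

/-- `(A : a)`. -/
def colon (A : Set R) (a : R) : Set R := {r : R | mul a r ∈ A}

/-- `(A : M)` for a set `M`. -/
def colonSet (A B : Set R) : Set R := {r : R | ∀ b ∈ B, mul r b ∈ A}

/-- Prime hyperideal. -/
def IsPrime (N : Hyperideal R) : Prop :=
  N.IsProper ∧ ∀ a b : R, mul a b ∈ N → a ∈ N ∨ b ∈ N

/-- Weakly prime hyperideal. -/
def IsWeaklyPrime (N : Hyperideal R) : Prop :=
  N.IsProper ∧ ∀ a b : R, mul a b ∈ N → mul a b ≠ zero → a ∈ N ∨ b ∈ N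

/-- `φ`-prime hyperideal. -/
def IsPhiPrime (φ : Hyperideal R → Set R) (N : Hyperideal R) : Prop :=
  N.IsProper ∧ ∀ a b : R, mul a b ∈ N → mul a b ∉ φ N → a ∈ N ∨ b ∈ N

/-- Primary hyperideal. -/
def IsPrimary (N : Hyperideal R) : Prop :=
  N.IsProper ∧ ∀ a b : R, mul a b ∈ N → a ∈ N ∨ ∃ k : ℕ, 0 < k ∧ hpow b k ∈ N

/-- `φ`-primary hyperideal. -/
def IsPhiPrimary (φ : Hyperideal R → Set R) (N : Hyperideal R) : Prop :=
  N.IsProper ∧ ∀ a b : R, mul a b ∈ N → mul a b ∉ φ N →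
    a ∈ N ∨ ∃ k : ℕ, 0 < k ∧ hpow b k ∈ N

/-- `δ`-primary hyperideal. -/
def IsDeltaPrimary (δ : Hyperideal R → Hyperideal R) (N : Hyperideal R) : Prop :=
  N.IsProper ∧ ∀ a b : R, mul a b ∈ N → a ∈ N ∨ b ∈ δ N

/-- `φ`-`δ`-primary hyperideal. -/
def IsPhiDeltaPrimary (φ : Hyperideal R → Set R) (δ : Hyperideal R → Hyperideal R)
    (N : Hyperideal R) : Prop :=
  N.IsProper ∧ ∀ a b : R, mul a b ∈ N → mul a b ∉ φ N → a ∈ N ∨ b ∈ δ N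

/-- `φ : L(R) → L(R) ∪ {∅}` : every value is a hyperideal or the empty set. -/
def MapsToIdealOrEmpty (φ : Hyperideal R → Set R) : Prop :=
  ∀ I : Hyperideal R, φ I = ∅ ∨ ∃ J : Hyperideal R, φ I = ↑J

/-- A reduction function. -/
def IsReduction (φ : Hyperideal R → Set R) : Prop :=
  MapsToIdealOrEmpty φ ∧ (∀ I : Hyperideal R, φ I ⊆ ↑I) ∧
    ∀ I J : Hyperideal R, (I : Set R) ⊆ ↑J → φ I ⊆ φ J

/-- An expansion function. -/
def IsExpansion (δ : Hyperideal R → Hyperideal R) : Prop :=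
  (∀ I : Hyperideal R, (I : Set R) ⊆ ↑(δ I)) ∧
    ∀ I J : Hyperideal R, (I : Set R) ⊆ ↑J → (δ I : Set R) ⊆ ↑(δ J)

/-- `φ_w(N) = ⋂_{n ≥ 1} N^n`. -/
def phiW (N : Hyperideal R) : Set R := ⋂ (n : ℕ) (_ : 1 ≤ n), idealPow N n

lemma zero_mem (N : Hyperideal R) : zero ∈ N := by
  obtain ⟨a, ha⟩ := N.nonempty'
  exact N.hadd_subset' a ha (neg a) (N.neg_mem' a ha) (zero_mem_hadd_neg a)

lemma proper_of_subset_proper {M T : Hyperideal R} (h : (M : Set R) ⊆ ↑T)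
    (hT : T.IsProper) : M.IsProper :=
  fun hu => hT (Set.univ_subset_iff.mp (hu ▸ h))

lemma mulNeg (a b : R) : mul a (neg b) = neg (mul a b) := by
  apply neg_unique
  have h := distrib a b (neg b)
  have h0 : mul a zero ∈ (fun x => mul a x) '' hadd b (neg b) :=
    ⟨zero, zero_mem_hadd_neg b, rfl⟩
  rw [h, mul_zero] at h0
  exact h0

lemma mem_genIdeal {S : Set R} {x : R} :
    x ∈ genIdeal S ↔ ∀ I : Hyperideal R, S ⊆ ↑I → x ∈ I := by
  constructor
  · intro h I hS
    exact Set.mem_sInter.mp h _ ⟨⟨I, rfl⟩, hS⟩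
  · intro h
    refine Set.mem_sInter.mpr ?_
    rintro C ⟨⟨I, rfl⟩, hS⟩
    exact h I hS

lemma subset_genIdeal (S : Set R) : S ⊆ genIdeal S :=
  fun _ hx => mem_genIdeal.mpr fun _ hS => hS hx

lemma genIdeal_subset {S : Set R} {I : Hyperideal R} (h : S ⊆ ↑I) : genIdeal S ⊆ ↑I :=
  fun _ hx => mem_genIdeal.mp hx I h

lemma zero_mem_genIdeal (S : Set R) : zero ∈ genIdeal S :=
  mem_genIdeal.mpr fun I _ => zero_mem I

lemma genIdeal_hadd {S : Set R} {a b : R} (ha : a ∈ genIdeal S) (hb : b ∈ genIdeal S) :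
    hadd a b ⊆ genIdeal S := by
  intro c hc
  exact mem_genIdeal.mpr fun I hS =>
    I.hadd_subset' a (mem_genIdeal.mp ha I hS) b (mem_genIdeal.mp hb I hS) hc

lemma genIdeal_neg {S : Set R} {a : R} (ha : a ∈ genIdeal S) : neg a ∈ genIdeal S :=
  mem_genIdeal.mpr fun I hS => I.neg_mem' a (mem_genIdeal.mp ha I hS)

lemma genIdeal_mul {S : Set R} (r : R) {a : R} (ha : a ∈ genIdeal S) :
    mul r a ∈ genIdeal S :=
  mem_genIdeal.mpr fun I hS => I.mul_mem' r a (mem_genIdeal.mp ha I hS)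

lemma genIdeal_subset_genIdeal {S S' : Set R} (h : S ⊆ genIdeal S') :
    genIdeal S ⊆ genIdeal S' := by
  intro x hx
  refine mem_genIdeal.mpr fun I hS' => ?_
  exact mem_genIdeal.mp hx I (h.trans (fun y hy => mem_genIdeal.mp hy I hS'))

lemma mul_mem_hadd_mul {a b c y : R} (hy : y ∈ hadd b c) :
    mul a y ∈ hadd (mul a b) (mul a c) := by
  rw [← distrib]
  exact ⟨y, hy, rfl⟩

lemma hadd_mul_subset {S : Set R} {a b c : R} (h : ∀ y ∈ hadd b c, mul a y ∈ S) :
    hadd (mul a b) (mul a c) ⊆ S := by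
  rw [← distrib]
  rintro z ⟨y, hy, rfl⟩
  exact h y hy

lemma extract {J : Hyperideal R} {u v : R} (hu : u ∈ J) (h : hadd u v ⊆ (J : Set R)) :
    v ∈ J := by
  obtain ⟨z, hz⟩ := hadd_nonempty u v
  exact J.hadd_subset' _ (J.neg_mem' _ hu) _ (h hz) (reversible u v z hz)

lemma setPow_succ_subset (T : Hyperideal R) (n : ℕ) : setPow (T : Set R) (n+1) ⊆ ↑T := by
  induction n with
  | zero => exact fun _ hx => hx
  | succ n ih =>
      rintro x ⟨t, ht, y, hy, rfl⟩
      exact T.mul_mem' t y (ih hy)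

lemma mul_mem_idealPow_succ (T : Hyperideal R) (n : ℕ)
    {t x : R} (ht : t ∈ T) (hx : x ∈ idealPow T (n+1)) : mul t x ∈ idealPow T (n+2) := by
  let K : Hyperideal R :=
    { carrier := {y : R | ∀ s : R, s ∈ T → mul s y ∈ idealPow T (n+2)}
      nonempty' := ⟨zero, fun s _ => by rw [mul_zero]; exact zero_mem_genIdeal _⟩
      hadd_subset' := by
        intro a ha b hb c hc s hs
        exact genIdeal_hadd (ha s hs) (hb s hs) (mul_mem_hadd_mul hc)
      neg_mem' := by
        intro a ha s hs
        rw [mulNeg]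
        exact genIdeal_neg (ha s hs)
      mul_mem' := by
        intro r a ha s hs
        have h1 : mul s (mul r a) = mul r (mul s a) := by
          rw [← mul_assoc, mul_comm s r, mul_assoc]
        rw [h1]
        exact genIdeal_mul r (ha s hs) }
  have hsub : setPow (↑T) (n+1) ⊆ (K : Set R) := by
    intro y hy s hs
    exact subset_genIdeal _ ⟨s, hs, y, hy, rfl⟩
  exact genIdeal_subset hsub hx t ht

lemma step1 {T J : Hyperideal R} (φ : Hyperideal R → Set R)
    (hT : IsPhiPrime φ T) (hJ : φ T = ↑J)
    {a b : R} (ha : a ∉ T) (hb : b ∉ T) (hab : mul a b ∈ T) (habJ : mul a b ∈ J)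
    {q : R} (hq : q ∈ T) : mul a q ∈ J := by
  have himg : ∀ y ∈ hadd b q, mul a y ∈ (J : Set R) := by
    intro y hy
    have hmemT : mul a y ∈ T :=
      T.hadd_subset' _ hab _ (T.mul_mem' a q hq) (mul_mem_hadd_mul hy)
    by_contra hnot
    rcases hT.2 a y hmemT (by rw [hJ]; exact hnot) with h | h
    · exact ha h
    · have hy' : y ∈ hadd q b := by rw [hadd_comm]; exact hy
      exact hb (T.hadd_subset' _ (T.neg_mem' q hq) _ h (reversible q b y hy'))
  exact extract habJ (hadd_mul_subset himg)

lemma step2 {T J : Hyperideal R} (φ : Hyperideal R → Set R)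
    (hT : IsPhiPrime φ T) (hJ : φ T = ↑J)
    {a b : R} (ha : a ∉ T) (hb : b ∉ T) (hab : mul a b ∈ T) (habJ : mul a b ∈ J)
    {p q : R} (hp : p ∈ T) (hq : q ∈ T) : mul p q ∈ J := by
  have hba : mul b a ∈ T := by rw [mul_comm]; exact hab
  have hbaJ : mul b a ∈ J := by rw [mul_comm]; exact habJ
  have haq : mul a q ∈ J := step1 φ hT hJ ha hb hab habJ hq
  have hbp : mul b p ∈ J := step1 φ hT hJ hb ha hba hbaJ hp
  have hpy : ∀ y ∈ hadd b q, mul p y ∈ (J : Set R) := by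
    intro y hy
    have hayJ : mul a y ∈ J := J.hadd_subset' _ habJ _ haq (mul_mem_hadd_mul hy)
    have hayT : mul a y ∈ T :=
      T.hadd_subset' _ hab _ (T.mul_mem' a q hq) (mul_mem_hadd_mul hy)
    have hxy : ∀ x ∈ hadd a p, mul y x ∈ (J : Set R) := by
      intro x hx
      have hxyT : mul y x ∈ T := by
        have h1 : mul y x ∈ hadd (mul y a) (mul y p) := mul_mem_hadd_mul hx
        rw [mul_comm y a] at h1
        exact T.hadd_subset' _ hayT _ (T.mul_mem' y p hp) h1
      by_contra hnot
      rcases hT.2 y x hxyT (by rw [hJ]; exact hnot) with h | h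
      · have hy' : y ∈ hadd q b := by rw [hadd_comm]; exact hy
        exact hb (T.hadd_subset' _ (T.neg_mem' q hq) _ h (reversible q b y hy'))
      · have hx' : x ∈ hadd p a := by rw [hadd_comm]; exact hx
        exact ha (T.hadd_subset' _ (T.neg_mem' p hp) _ h (reversible p a x hx'))
    have hyaJ : mul y a ∈ J := by rw [mul_comm]; exact hayJ
    have hres : mul y p ∈ J := extract hyaJ (hadd_mul_subset hxy)
    rw [mul_comm p y]
    exact hres
  have hpbJ : mul p b ∈ J := by rw [mul_comm]; exact hbp
  exact extract hpbJ (hadd_mul_subset hpy)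

/-- If `T` is `φ`-prime for some `φ ≤ φ₃`, then `T` is `w`-prime. -/
theorem phiPrime_le_phi3_wPrime {R : Type u} [KrasnerHyperring R]
    (φ : Hyperideal R → Set R) (hφ : MapsToIdealOrEmpty φ)
    (hle : ∀ I : Hyperideal R, φ I ⊆ idealPow I 3)
    (T : Hyperideal R) (hT : IsPhiPrime φ T) :
    IsPhiPrime phiW T := by
  obtain ⟨hproper, hprime⟩ := hT
  refine ⟨hproper, ?_⟩
  intro a b hab hnw
  by_contra hcon
  push_neg at hcon
  obtain ⟨ha, hb⟩ := hcon
  have habφ : mul a b ∈ φ T := by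
    by_contra h
    rcases hprime a b hab h with h' | h'
    exacts [ha h', hb h']
  obtain hE | ⟨J, hJ⟩ := hφ T
  · rw [hE] at habφ; exact habφ
  have habJ : mul a b ∈ J := by rw [hJ] at habφ; exact habφ
  have hJ3 : (J : Set R) ⊆ idealPow T 3 := hJ ▸ hle T
  have hsq : setPow (↑T) 2 ⊆ (J : Set R) := by
    rintro x ⟨p, hp, q, hq, rfl⟩
    exact step2 φ ⟨hproper, hprime⟩ hJ ha hb hab habJ hp hq
  have key : ∀ n : ℕ, idealPow T 3 ⊆ idealPow T (n+1) := by
    intro n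
    induction n with
    | zero =>
        apply genIdeal_subset_genIdeal
        exact (setPow_succ_subset T 2).trans (subset_genIdeal _)
    | succ n ih =>
        apply genIdeal_subset_genIdeal
        rintro x ⟨t, ht, y, hy, rfl⟩
        exact mul_mem_idealPow_succ T n ht (ih (hJ3 (hsq hy)))
  have habW : mul a b ∈ phiW T := by
    refine Set.mem_iInter.mpr fun n => Set.mem_iInter.mpr fun hn => ?_
    cases n with
    | zero => exact absurd hn (by norm_num)
    | succ m => exact key m (hJ3 habJ)
  exact hnw habW

end KrasnerHyperring
end

section
/- Let R be a commutative Krasner hyperring with nonzero identity, φ a reduction function and δ an expansion function on L(R), and let T be a φ-δ-primary hyperideal of R such that (φ(T) : a) = φ((T : a)) for each a ∈ R. Then for every a ∈ R with (T : a) ≠ R, the hyperideal (T : a) is a φ-δ-primary hyperideal of R. -/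
universe u

namespace KrasnerHyperring

variable {R : Type u} [KrasnerHyperring R]

lemma mul_neg_eq_neg_mul (a r : R) : mul a (neg r) = neg (mul a r) := by
  apply neg_unique
  have h0 : zero ∈ hadd r (neg r) := zero_mem_hadd_neg r
  have : mul a zero ∈ (fun x => mul a x) '' hadd r (neg r) := ⟨zero, h0, rfl⟩
  rw [distrib, mul_zero] at this
  exact this

/-- `(T : a)` as a hyperideal. -/
def colonIdeal (T : Hyperideal R) (a : R) : Hyperideal R where
  carrier := colon (T : Set R) a
  nonempty' := ⟨zero, show mul a zero ∈ (T : Set R) by rw [mul_zero]; exact zero_mem T⟩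
  hadd_subset' := by
    intro r hr r' hr' x hx
    have : mul a x ∈ (fun y => mul a y) '' hadd r r' := ⟨x, hx, rfl⟩
    rw [distrib] at this
    exact T.hadd_subset' (mul a r) hr (mul a r') hr' this
  neg_mem' := by
    intro r hr
    show mul a (neg r) ∈ (T : Set R)
    rw [mul_neg_eq_neg_mul]
    exact T.neg_mem' (mul a r) hr
  mul_mem' := by
    intro s r hr
    show mul a (mul s r) ∈ (T : Set R)
    have : mul a (mul s r) = mul s (mul a r) := by
      rw [← mul_assoc, mul_comm a s, mul_assoc]
    rw [this]
    exact T.mul_mem' s (mul a r) hr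

/-- STATEMENT 15: if `T` is `φ`-`δ`-primary and `(φ(T) : a) = φ((T : a))` for all `a`,
then every proper `(T : a)` is a `φ`-`δ`-primary hyperideal. -/
theorem colon_phiDeltaPrimary {R : Type u} [KrasnerHyperring R]
    (φ : Hyperideal R → Set R) (δ : Hyperideal R → Hyperideal R)
    (hφ : IsReduction φ) (hδ : IsExpansion δ)
    (T : Hyperideal R) (hT : IsPhiDeltaPrimary φ δ T)
    (hcol : ∀ a : R, colon (φ T) a = φ (colonIdeal T a)) :
    ∀ a : R, (colonIdeal T a).IsProper → IsPhiDeltaPrimary φ δ (colonIdeal T a) := by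
  intro a hproper
  refine ⟨hproper, ?_⟩
  intro x y hxy hnxy
  have hTsub : (T : Set R) ⊆ ↑(colonIdeal T a) := by
    intro r hr
    show mul a r ∈ (T : Set R)
    exact T.mul_mem' a r hr
  have hmem : mul (mul a x) y ∈ T := by
    have : mul a (mul x y) ∈ (T : Set R) := hxy
    rwa [← mul_assoc] at this
  have hnmem : mul (mul a x) y ∉ φ T := by
    intro h
    apply hnxy
    rw [← hcol a]
    show mul a (mul x y) ∈ φ T
    rwa [← mul_assoc]
  rcases hT.2 (mul a x) y hmem hnmem with h | h
  · exact Or.inl h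
  · exact Or.inr (hδ.2 T (colonIdeal T a) hTsub h)

end KrasnerHyperring
end
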